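/- Define the discrete iterated kernels by K_0 = K and K_n(t,s) = Σ_{η=s+1}^{t-1} K(t,η) K_{n-1}(η,s) for n ≥ 1. Then for every n ≥ 0 and all integers a ≤ s ≤ t ≤ b, |K_n(t,s)| ≤ M^{n+1} · C(t-s, n), where M = max_{(t,s) ∈ Ω} |K(t,s)| and C(·,·) is the binomial coefficient. -/

import Mathlib

open Finset

/-- The discrete iterated kernels: `K₀ = K` and
`Kₙ(t,s) = Σ_{η=s+1}^{t-1} K(t,η) K_{n-1}(η,s)` for `n ≥ 1`. -/
noncomputable def iterKZ (K : ℤ → ℤ → ℝ) : ℕ → ℤ → ℤ → ℝ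
  | 0 => K
  | n + 1 => fun t s => ∑ η ∈ Finset.Ioo s t, K t η * iterKZ K n η s

lemma sum_range_choose_le_aux (m n : ℕ) :
    ∑ k ∈ Finset.range m, k.choose n ≤ m.choose (n+1) := by
  induction m with
  | zero => simp
  | succ m ih =>
    rw [Finset.sum_range_succ, Nat.choose_succ_succ]
    simp only [Nat.succ_eq_add_one] at *
    omega

lemma sum_Ioo_choose_le (s t : ℤ) (n : ℕ) :
    ∑ η ∈ Finset.Ioo s t, (((η - s).toNat.choose n : ℝ))
      ≤ ((t - s).toNat.choose (n+1) : ℝ) := by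
  have h1 : ∑ η ∈ Finset.Ioo s t, (((η - s).toNat.choose n : ℝ))
      = ∑ k ∈ Finset.Ioo 0 (t - s).toNat, ((k.choose n : ℝ)) := by
    apply Finset.sum_nbij' (fun η => (η - s).toNat) (fun k => s + (k : ℤ))
    · intro η hη
      simp only [Finset.mem_Ioo] at *
      omega
    · intro k hk
      simp only [Finset.mem_Ioo] at *
      omega
    · intro η hη
      simp only [Finset.mem_Ioo] at hη
      omega
    · intro k hk
      simp only [Finset.mem_Ioo] at hk
      omega
    · intro η hη
      simp
  rw [h1]
  calc ∑ k ∈ Finset.Ioo 0 (t - s).toNat, ((k.choose n : ℝ))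
      ≤ ∑ k ∈ Finset.range (t - s).toNat, ((k.choose n : ℝ)) := by
        apply Finset.sum_le_sum_of_subset_of_nonneg
        · intro k hk
          simp only [Finset.mem_Ioo] at hk
          simp only [Finset.mem_range]
          omega
        · intro k _ _
          positivity
    _ ≤ ((t - s).toNat.choose (n+1) : ℝ) := by
        rw [← Nat.cast_sum]
        exact_mod_cast sum_range_choose_le_aux _ _

/-- **Bound on the discrete iterated kernels** (case `T = ℤ`, where `σ(s) = s+1` and
`hₙ(t,s) = C(t-s,n)`): for every `n ≥ 0` and all integers `a ≤ s ≤ t ≤ b`,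
`|Kₙ(t,s)| ≤ M^{n+1} · C(t-s,n)`, where `M = max_{(t,s) ∈ Ω} |K(t,s)|`. -/
theorem discrete_iterK_bound
    (a b : ℤ) (hab : a < b) (K : ℤ → ℤ → ℝ)
    (M : ℝ)
    (hM : M = sSup ((fun p : ℤ × ℤ => |K p.1 p.2|) ''
      {p : ℤ × ℤ | a ≤ p.2 ∧ p.2 ≤ p.1 ∧ p.1 ≤ b})) :
    ∀ n : ℕ, ∀ t s : ℤ, a ≤ s → s ≤ t → t ≤ b →
      |iterKZ K n t s| ≤ M ^ (n + 1) * ((t - s).toNat.choose n) := by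
  have hfin : ({p : ℤ × ℤ | a ≤ p.2 ∧ p.2 ≤ p.1 ∧ p.1 ≤ b}).Finite := by
    apply Set.Finite.subset (Set.finite_Icc (a, a) (b, b))
    rintro ⟨t, s⟩ ⟨h1, h2, h3⟩
    simp only [Set.mem_Icc, Prod.le_def]
    omega
  have hbdd : BddAbove ((fun p : ℤ × ℤ => |K p.1 p.2|) ''
      {p : ℤ × ℤ | a ≤ p.2 ∧ p.2 ≤ p.1 ∧ p.1 ≤ b}) :=
    (hfin.image _).bddAbove
  have hK : ∀ t s : ℤ, a ≤ s → s ≤ t → t ≤ b → |K t s| ≤ M := by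
    intro t s h1 h2 h3
    rw [hM]
    exact le_csSup hbdd ⟨(t, s), ⟨h1, h2, h3⟩, rfl⟩
  have hM0 : 0 ≤ M := le_trans (abs_nonneg _) (hK a a le_rfl le_rfl hab.le)
  intro n
  induction n with
  | zero =>
    intro t s h1 h2 h3
    simpa [iterKZ] using hK t s h1 h2 h3
  | succ n ih =>
    intro t s h1 h2 h3
    have step : ∀ η ∈ Finset.Ioo s t,
        |K t η * iterKZ K n η s| ≤ M ^ (n + 2) * ((η - s).toNat.choose n) := by
      intro η hη
      simp only [Finset.mem_Ioo] at hη
      rw [abs_mul]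
      have hKη : |K t η| ≤ M := hK t η (by omega) (by omega) h3
      have hih : |iterKZ K n η s| ≤ M ^ (n + 1) * ((η - s).toNat.choose n) :=
        ih η s h1 (by omega) (by omega)
      calc |K t η| * |iterKZ K n η s|
          ≤ M * (M ^ (n + 1) * ((η - s).toNat.choose n)) := by
            apply mul_le_mul hKη hih (abs_nonneg _) hM0
        _ = M ^ (n + 2) * ((η - s).toNat.choose n) := by ring
    calc |iterKZ K (n + 1) t s|
        ≤ ∑ η ∈ Finset.Ioo s t, |K t η * iterKZ K n η s| := by
          simp only [iterKZ]
          exact Finset.abs_sum_le_sum_abs _ _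
      _ ≤ ∑ η ∈ Finset.Ioo s t, M ^ (n + 2) * ((η - s).toNat.choose n) :=
          Finset.sum_le_sum step
      _ = M ^ (n + 2) * ∑ η ∈ Finset.Ioo s t, (((η - s).toNat.choose n : ℝ)) := by
          rw [Finset.mul_sum]
      _ ≤ M ^ (n + 2) * ((t - s).toNat.choose (n + 1) : ℝ) := by
          apply mul_le_mul_of_nonneg_left (sum_Ioo_choose_le s t n) (by positivity)
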